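/- A hereditarily k-colorable hypergraph on n vertices has unique-maximum choice number at most log_{k/(k-1)} n + 1. -/

import Mathlib

def IsUMColoring {V : Type*} (E : Finset (Finset V)) (C : V → ℕ) : Prop :=
  ∀ e ∈ E, e.Nonempty → ∃ x ∈ e, ∀ y ∈ e, y ≠ x → C y < C x

def HereditarilyColorable {V : Type*} [DecidableEq V]
    (E : Finset (Finset V)) (k : ℕ) : Prop :=
  ∀ V' : Finset V, ∃ C : V → ℕ, (∀ v, C v < k) ∧
    ∀ e ∈ E, 2 ≤ (e ∩ V').card → ∃ x ∈ e ∩ V', ∃ y ∈ e ∩ V', C x ≠ C y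

private lemma filter_lt_succ_card (s : Finset ℕ) (m : ℕ) :
    (s.filter (· < m + 1)).card =
      (s.filter (· < m)).card + (if m ∈ s then 1 else 0) := by
  by_cases hm : m ∈ s
  · rw [if_pos hm]
    have h1 : s.filter (· < m + 1) = insert m (s.filter (· < m)) := by
      ext a
      simp only [Finset.mem_filter, Finset.mem_insert]
      constructor
      · rintro ⟨ha, hlt⟩
        rcases Nat.lt_succ_iff_lt_or_eq.mp hlt with h | h
        · exact Or.inr ⟨ha, h⟩
        · exact Or.inl h
      · rintro (rfl | ⟨ha, hlt⟩)
        · exact ⟨hm, Nat.lt_succ_self a⟩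
        · exact ⟨ha, Nat.lt_succ_of_lt hlt⟩
    rw [h1, Finset.card_insert_of_notMem (by simp)]
  · rw [if_neg hm]
    have h1 : s.filter (· < m + 1) = s.filter (· < m) := by
      ext a
      simp only [Finset.mem_filter]
      constructor
      · rintro ⟨ha, hlt⟩
        refine ⟨ha, ?_⟩
        rcases Nat.lt_succ_iff_lt_or_eq.mp hlt with h | h
        · exact h
        · exact absurd (h ▸ ha) hm
      · rintro ⟨ha, hlt⟩
        exact ⟨ha, Nat.lt_succ_of_lt hlt⟩
    rw [h1]
    omega

private lemma exists_good_class {V : Type*} [DecidableEq V]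
    (E : Finset (Finset V)) (k : ℕ) (hk : 2 ≤ k)
    (hher : HereditarilyColorable E k)
    (A : Finset V) (wt : V → ℝ) (hwt : ∀ v, 0 ≤ wt v) :
    ∃ B, B ⊆ A ∧ (∑ v ∈ A, wt v) ≤ (k : ℝ) * ∑ v ∈ B, wt v ∧
      ∀ e ∈ E, e ∩ A ⊆ B → (e ∩ A).card ≤ 1 := by
  classical
  obtain ⟨C, hCk, hCe⟩ := hher A
  have hk0 : (0:ℝ) < (k:ℝ) := by
    have : (2:ℝ) ≤ (k:ℝ) := by exact_mod_cast hk
    linarith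
  have hpart : ∑ j ∈ Finset.range k, ∑ v ∈ A.filter (fun v => C v = j), wt v
      = ∑ v ∈ A, wt v :=
    Finset.sum_fiberwise_of_maps_to (fun v _ => Finset.mem_range.mpr (hCk v)) wt
  have hmul : (k:ℝ) * ((∑ v ∈ A, wt v) / (k:ℝ)) = ∑ v ∈ A, wt v := by
    field_simp
  obtain ⟨j, hj, hjle⟩ : ∃ j ∈ Finset.range k,
      (∑ v ∈ A, wt v) / (k:ℝ) ≤ ∑ v ∈ A.filter (fun v => C v = j), wt v := by
    apply Finset.exists_le_of_sum_le ⟨0, Finset.mem_range.mpr (by omega)⟩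
    rw [Finset.sum_const, Finset.card_range, nsmul_eq_mul, hmul, hpart]
  refine ⟨A.filter (fun v => C v = j), Finset.filter_subset _ _, ?_, ?_⟩
  · calc ∑ v ∈ A, wt v = (k:ℝ) * ((∑ v ∈ A, wt v) / (k:ℝ)) := hmul.symm
      _ ≤ (k:ℝ) * ∑ v ∈ A.filter (fun v => C v = j), wt v :=
          mul_le_mul_of_nonneg_left hjle (le_of_lt hk0)
  · intro e he hsub
    by_contra hcard
    push_neg at hcard
    have h2 : 2 ≤ (e ∩ A).card := hcard
    obtain ⟨x, hx, y, hy, hxy⟩ := hCe e he h2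
    have hxB := hsub hx
    have hyB := hsub hy
    rw [Finset.mem_filter] at hxB hyB
    exact hxy (hxB.2.trans hyB.2.symm)

/-- A hereditarily `k`-colorable hypergraph on `n` vertices has
unique-maximum choice number at most `log_{k/(k-1)} n + 1`: from any lists of
at least that size one can choose a unique-maximum coloring. -/
theorem um_choice_number {V : Type*} [Fintype V] [DecidableEq V]
    (E : Finset (Finset V)) (k : ℕ) (hk : 2 ≤ k)
    (hher : HereditarilyColorable E k)
    (L : V → Finset ℕ)
    (hL : ∀ v, Real.logb ((k : ℝ) / ((k : ℝ) - 1)) (Fintype.card V) + 1 ≤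
      ((L v).card : ℝ)) :
    ∃ f : V → ℕ, (∀ v, f v ∈ L v) ∧ IsUMColoring E f := by
  classical
  have hk2 : (2:ℝ) ≤ (k:ℝ) := by exact_mod_cast hk
  set w : ℝ := (k : ℝ) / ((k : ℝ) - 1) with hwdef
  have hk1 : (0:ℝ) < (k:ℝ) - 1 := by linarith
  have hw1 : 1 < w := by
    rw [hwdef, lt_div_iff₀ hk1]; linarith
  have hw0 : 0 < w := lt_trans one_pos hw1
  have key : ∀ (A : Finset V) (m : ℕ), ∃ B, B ⊆ A ∧
      (∑ v ∈ A, w ^ ((L v).filter (· < m)).card)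
        ≤ (k : ℝ) * ∑ v ∈ B, w ^ ((L v).filter (· < m)).card ∧
      ∀ e ∈ E, e ∩ A ⊆ B → (e ∩ A).card ≤ 1 :=
    fun A m => exists_good_class E k hk hher A
      (fun v => w ^ ((L v).filter (· < m)).card)
      (fun v => le_of_lt (pow_pos hw0 _))
  choose Bf hBsub hBsum hBcard using key
  set U : ℕ → Finset V := fun m =>
    Nat.rec Finset.univ (fun m Um => Um \ Bf (Um.filter (fun v => m ∈ L v)) m) m
    with hUdef
  have hU0 : U 0 = Finset.univ := rfl
  have hUsucc : ∀ m, U (m+1) = U m \ Bf ((U m).filter (fun v => m ∈ L v)) m :=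
    fun m => rfl
  have hUanti : ∀ m, U (m+1) ⊆ U m := by
    intro m; rw [hUsucc]; exact Finset.sdiff_subset
  have hUle : ∀ a b : ℕ, a ≤ b → U b ⊆ U a := by
    intro a b hab
    induction b with
    | zero =>
      have : a = 0 := Nat.le_zero.mp hab
      subst this; exact subset_rfl
    | succ b ih =>
      rcases Nat.eq_or_lt_of_le hab with rfl | h
      · exact subset_rfl
      · exact Finset.Subset.trans (hUanti b) (ih (Nat.lt_succ_iff.mp h))
  have hPhi : ∀ m, (∑ v ∈ U m, w ^ ((L v).filter (· < m)).card)
      ≤ (Fintype.card V : ℝ) := by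
    intro m
    induction m with
    | zero =>
      rw [hU0]
      have hz : ∀ v : V, ((L v).filter (· < 0)).card = 0 := by
        intro v; simp
      calc ∑ v ∈ Finset.univ, w ^ ((L v).filter (· < 0)).card
          = ∑ _v : V, (1:ℝ) := by
            apply Finset.sum_congr rfl; intro v _; rw [hz v, pow_zero]
        _ ≤ (Fintype.card V : ℝ) := by
            rw [Finset.sum_const, Finset.card_univ, nsmul_eq_mul, mul_one]
    | succ m ih =>
      set A : Finset V := (U m).filter (fun v => m ∈ L v) with hA
      set B : Finset V := Bf A m with hB
      have hBA : B ⊆ A := hBsub A m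
      have hAU : A ⊆ U m := Finset.filter_subset _ _
      have hsplit : U (m+1) = (U m \ A) ∪ (A \ B) := by
        rw [hUsucc m, ← hA, ← hB]
        ext z
        simp only [Finset.mem_sdiff, Finset.mem_union]
        constructor
        · rintro ⟨hz, hzB⟩
          by_cases hzA : z ∈ A
          · exact Or.inr ⟨hzA, hzB⟩
          · exact Or.inl ⟨hz, hzA⟩
        · rintro (⟨hz, hzA⟩ | ⟨hzA, hzB⟩)
          · exact ⟨hz, fun hzB => hzA (hBA hzB)⟩
          · exact ⟨hAU hzA, hzB⟩
      have hdisj : Disjoint (U m \ A) (A \ B) := by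
        rw [Finset.disjoint_left]
        rintro z hz1 hz2
        rw [Finset.mem_sdiff] at hz1 hz2
        exact hz1.2 hz2.1
      have h1 : ∑ v ∈ U m \ A, w ^ ((L v).filter (· < m + 1)).card
          = ∑ v ∈ U m \ A, w ^ ((L v).filter (· < m)).card := by
        apply Finset.sum_congr rfl
        intro v hv
        rw [Finset.mem_sdiff] at hv
        have hm : m ∉ L v := by
          intro h
          exact hv.2 (by rw [hA, Finset.mem_filter]; exact ⟨hv.1, h⟩)
        rw [filter_lt_succ_card, if_neg hm, Nat.add_zero]
      have h2 : ∑ v ∈ A \ B, w ^ ((L v).filter (· < m + 1)).card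
          = w * ∑ v ∈ A \ B, w ^ ((L v).filter (· < m)).card := by
        rw [Finset.mul_sum]
        apply Finset.sum_congr rfl
        intro v hv
        have hvA : v ∈ A := (Finset.mem_sdiff.mp hv).1
        have hm : m ∈ L v := by
          rw [hA, Finset.mem_filter] at hvA; exact hvA.2
        rw [filter_lt_succ_card, if_pos hm, pow_succ, mul_comm]
      rw [hsplit, Finset.sum_union hdisj, h1, h2,
        Finset.sum_sdiff_eq_sub hAU, Finset.sum_sdiff_eq_sub hBA]
      have hsum := hBsum A m
      have hSB0 : (0:ℝ) ≤ ∑ v ∈ B, w ^ ((L v).filter (· < m)).card :=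
        Finset.sum_nonneg fun v _ => le_of_lt (pow_pos hw0 _)
      have hwk : (w - 1) * (k:ℝ) = w := by
        rw [hwdef]
        field_simp
        ring
      have hkey : (w - 1) * (∑ v ∈ A, w ^ ((L v).filter (· < m)).card)
          ≤ w * ∑ v ∈ B, w ^ ((L v).filter (· < m)).card := by
        calc (w - 1) * (∑ v ∈ A, w ^ ((L v).filter (· < m)).card)
            ≤ (w - 1) * ((k:ℝ) * ∑ v ∈ B, w ^ ((L v).filter (· < m)).card) :=
              mul_le_mul_of_nonneg_left hsum (by linarith)
          _ = w * ∑ v ∈ B, w ^ ((L v).filter (· < m)).card := by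
              rw [← mul_assoc, hwk]
      set S := ∑ v ∈ U m, w ^ ((L v).filter (· < m)).card with hS
      set SA := ∑ v ∈ A, w ^ ((L v).filter (· < m)).card with hSA
      set SB := ∑ v ∈ B, w ^ ((L v).filter (· < m)).card with hSB
      have hring : S - SA + w * (SA - SB) = S + ((w - 1) * SA - w * SB) := by
        ring
      rw [hring]
      linarith [ih, hkey]
  have hex : ∀ v : V, ∃ m : ℕ, v ∉ U m := by
    intro v
    by_contra hcon
    push_neg at hcon
    set M : ℕ := (Finset.univ.sup fun u : V => (L u).sup id) + 1 with hM
    have hall : ∀ a ∈ L v, a < M := by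
      intro a ha
      have h1 : a ≤ (L v).sup id := Finset.le_sup (f := id) ha
      have h2 : (L v).sup id ≤ Finset.univ.sup (fun u : V => (L u).sup id) :=
        Finset.le_sup (f := fun u : V => (L u).sup id) (Finset.mem_univ v)
      omega
    have hfilter : (L v).filter (· < M) = L v := Finset.filter_true_of_mem hall
    have h1 : w ^ (L v).card ≤ (Fintype.card V : ℝ) := by
      have hP := hPhi M
      have hterm : w ^ ((L v).filter (· < M)).card
          ≤ ∑ u ∈ U M, w ^ ((L u).filter (· < M)).card :=
        Finset.single_le_sum (f := fun u => w ^ ((L u).filter (· < M)).card)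
          (fun u _ => le_of_lt (pow_pos hw0 _)) (hcon M)
      rw [hfilter] at hterm
      linarith
    have hn0 : (0:ℝ) < (Fintype.card V : ℝ) := by
      have : 0 < Fintype.card V := Fintype.card_pos_iff.mpr ⟨v⟩
      exact_mod_cast this
    have h2 : (Fintype.card V : ℝ) < w ^ (L v).card := by
      have hlog : Real.logb w (Fintype.card V) < ((L v).card : ℝ) := by
        have := hL v
        linarith
      have h3 := (Real.logb_lt_iff_lt_rpow hw1 hn0).mp hlog
      rwa [Real.rpow_natCast] at h3
    linarith
  have hNpos : ∀ v : V, 0 < Nat.find (hex v) := by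
    intro v
    by_contra h
    push_neg at h
    have h0 : Nat.find (hex v) = 0 := Nat.le_zero.mp h
    have hs := Nat.find_spec (hex v)
    rw [h0, hU0] at hs
    exact hs (Finset.mem_univ v)
  set f : V → ℕ := fun v => Nat.find (hex v) - 1 with hfdef
  have hfU : ∀ v, v ∈ U (f v) := by
    intro v
    have hlt : f v < Nat.find (hex v) := by
      have := hNpos v
      simp only [hfdef]
      omega
    exact not_not.mp (Nat.find_min (hex v) hlt)
  have hfU1 : ∀ v, v ∉ U (f v + 1) := by
    intro v
    have heq : f v + 1 = Nat.find (hex v) := by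
      have := hNpos v
      simp only [hfdef]
      omega
    rw [heq]
    exact Nat.find_spec (hex v)
  have hmem : ∀ v m, v ∈ U m → m ≤ f v := by
    intro v m hvm
    by_contra h
    push_neg at h
    exact hfU1 v (hUle (f v + 1) m h hvm)
  have hfB : ∀ v, v ∈ Bf ((U (f v)).filter (fun u => f v ∈ L u)) (f v) := by
    intro v
    have h1 := hfU1 v
    rw [hUsucc, Finset.mem_sdiff] at h1
    push_neg at h1
    exact h1 (hfU v)
  have hfL : ∀ v, f v ∈ L v := by
    intro v
    have h1 := hBsub _ _ (hfB v)
    rw [Finset.mem_filter] at h1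
    exact h1.2
  refine ⟨f, hfL, ?_⟩
  intro e he hene
  obtain ⟨x, hxe, hxmax⟩ := Finset.exists_max_image e f hene
  refine ⟨x, hxe, ?_⟩
  intro y hye hyx
  rcases lt_or_eq_of_le (hxmax y hye) with hlt | heq
  · exact hlt
  · exfalso
    have hsub : e ∩ ((U (f x)).filter (fun u => f x ∈ L u))
        ⊆ Bf ((U (f x)).filter (fun u => f x ∈ L u)) (f x) := by
      intro z hz
      rw [Finset.mem_inter, Finset.mem_filter] at hz
      have hze : z ∈ e := hz.1
      have hzU : z ∈ U (f x) := hz.2.1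
      have hzle : f z ≤ f x := hxmax z hze
      have hz1 : z ∉ U (f x + 1) := by
        intro hcon
        have := hmem z (f x + 1) hcon
        omega
      rw [hUsucc, Finset.mem_sdiff] at hz1
      push_neg at hz1
      exact hz1 hzU
    have hcard := hBcard _ (f x) e he hsub
    have hx2 : x ∈ e ∩ ((U (f x)).filter (fun u => f x ∈ L u)) := by
      rw [Finset.mem_inter, Finset.mem_filter]
      exact ⟨hxe, hfU x, hfL x⟩
    have hy2 : y ∈ e ∩ ((U (f x)).filter (fun u => f x ∈ L u)) := by
      rw [Finset.mem_inter, Finset.mem_filter]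
      refine ⟨hye, ?_, ?_⟩
      · rw [← heq]; exact hfU y
      · rw [← heq]; exact hfL y
    have h2 : 1 < (e ∩ ((U (f x)).filter (fun u => f x ∈ L u))).card :=
      Finset.one_lt_card.mpr ⟨y, hy2, x, hx2, hyx⟩
    omega
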